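/- Let 0 < ε < 1 and M ≤ 2^{(1−ε)L}. Then any 1-substitution-correcting code C ⊆ binom({0,1}^L, M) satisfies |C| ≤ binom(2^L, M)/(εML); consequently r(C) ≥ log(ML) − O(1). -/

import Mathlib

/-- The `K`-substitution ball of a word `W`. -/
def subBall (L K : ℕ) (W : Finset (Fin L → Bool)) : Set (Finset (Fin L → Bool)) :=
  {V | ∃ g : (Fin L → Bool) → (Fin L → Bool),
    (∑ x ∈ W, hammingDist x (g x)) ≤ K ∧ V = W.image g}

open Finset Real

def edgeCount {n : ℕ} (S : Finset (Fin n → Bool)) : ℕ :=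
  ((S ×ˢ S).filter fun p => hammingDist p.1 p.2 = 1).card

lemma card_filter_product {α β : Type*} [DecidableEq α] [DecidableEq β]
    (s : Finset α) (t : Finset β) (P : α → β → Prop) [∀ x y, Decidable (P x y)] :
    ((s ×ˢ t).filter fun p => P p.1 p.2).card = ∑ x ∈ s, (t.filter (P x)).card := by
  have he : (s ×ˢ t).filter (fun p => P p.1 p.2)
      = s.biUnion (fun x => (t.filter (P x)).image (Prod.mk x)) := by
    ext p
    simp only [mem_filter, mem_product, mem_biUnion, mem_image]
    constructor
    · rintro ⟨⟨h1, h2⟩, h3⟩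
      exact ⟨p.1, h1, p.2, by simp [h2, h3]⟩
    · rintro ⟨x, hx, y, hy, rfl⟩
      exact ⟨⟨hx, hy.1⟩, hy.2⟩
  rw [he, card_biUnion]
  · congr 1; funext x
    exact card_image_of_injective _ (fun a b h => by simpa using h)
  · intro x hx y hy hxy
    simp only [disjoint_left]
    intro p hp hq
    simp only [mem_image] at hp hq
    obtain ⟨a, _, rfl⟩ := hp
    obtain ⟨b, _, hb⟩ := hq
    exact hxy (by simpa using (congrArg Prod.fst hb).symm)


def nbrWords {L : ℕ} (W : Finset (Fin L → Bool)) : Finset (Finset (Fin L → Bool)) :=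
  ((W ×ˢ (univ \ W)).filter fun p => hammingDist p.1 p.2 = 1).image
    (fun p => insert p.2 (W.erase p.1))

lemma nbr_card {L : ℕ} (W : Finset (Fin L → Bool)) :
    (nbrWords W).card
      = ((W ×ˢ (univ \ W)).filter fun p => hammingDist p.1 p.2 = 1).card := by
  rw [nbrWords, card_image_of_injOn]
  intro p hp q hq heq
  simp only [coe_filter, Set.mem_setOf_eq, mem_coe, mem_product, mem_sdiff, mem_univ,
    true_and] at hp hq
  obtain ⟨⟨hp1, hp2⟩, hpd⟩ := hp
  obtain ⟨⟨hq1, hq2⟩, hqd⟩ := hq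
  simp only [] at heq
  have heq' : insert p.2 (W.erase p.1) = insert q.2 (W.erase q.1) := heq
  have h2 : p.2 = q.2 := by
    by_contra hne
    have : p.2 ∈ insert q.2 (W.erase q.1) := by
      rw [← heq']; exact mem_insert_self _ _
    rcases mem_insert.1 this with h | h
    · exact hne h
    · exact hp2 (mem_of_mem_erase h)
  have h1 : p.1 = q.1 := by
    by_contra hne
    have hq1p : q.1 ∈ W.erase p.1 := mem_erase.2 ⟨fun h => hne h.symm, hq1⟩
    have : q.1 ∈ insert q.2 (W.erase q.1) := by
      rw [← heq']; exact mem_insert_of_mem hq1p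
    rcases mem_insert.1 this with h | h
    · exact hq2 (h ▸ hq1)
    · exact (mem_erase.1 h).1 rfl
  exact Prod.ext h1 h2

lemma nbr_card_real {L : ℕ} (W : Finset (Fin L → Bool))
    (hL1 : ∀ x : Fin L → Bool, (univ.filter fun y => hammingDist x y = 1).card = L) :
    ((nbrWords W).card : ℝ) = W.card * L - edgeCount W := by
  rw [nbr_card]
  rw [card_filter_product W (univ \ W) (fun x y => hammingDist x y = 1)]
  have hdeg : ∀ x ∈ W, ((univ \ W).filter fun y => hammingDist x y = 1).card
      = L - ((W.filter fun y => hammingDist x y = 1)).card := by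
    intro x _
    have hset : (univ \ W).filter (fun y => hammingDist x y = 1)
        = (univ.filter fun y => hammingDist x y = 1)
          \ (W.filter fun y => hammingDist x y = 1) := by
      ext y
      simp only [mem_filter, mem_sdiff, mem_univ, true_and]
      tauto
    rw [hset, card_sdiff_of_subset (filter_subset_filter _ (subset_univ W)), hL1 x]
  have hle : ∀ x ∈ W, ((W.filter fun y => hammingDist x y = 1)).card ≤ L := by
    intro x _
    calc ((W.filter fun y => hammingDist x y = 1)).card
        ≤ ((univ.filter fun y => hammingDist x y = 1)).card :=
          card_le_card (filter_subset_filter _ (subset_univ W))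
      _ = L := hL1 x
  have hE : edgeCount W = ∑ x ∈ W, ((W.filter fun y => hammingDist x y = 1)).card :=
    card_filter_product W W (fun x y => hammingDist x y = 1)
  have h1 : (∑ x ∈ W, ((univ \ W).filter fun y => hammingDist x y = 1).card)
      + edgeCount W = W.card * L := by
    rw [hE, ← Finset.sum_add_distrib]
    rw [Finset.sum_congr rfl
      (fun x hx => by rw [hdeg x hx, Nat.sub_add_cancel (hle x hx)])]
    simp [mul_comm]
  have h2 := congrArg (Nat.cast : ℕ → ℝ) h1
  push_cast at h2 ⊢
  linarith

lemma nbr_card_mem {L : ℕ} (W V : Finset (Fin L → Bool)) (hV : V ∈ nbrWords W) :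
    V.card = W.card := by
  rw [nbrWords, mem_image] at hV
  obtain ⟨p, hp, rfl⟩ := hV
  simp only [mem_filter, mem_product, mem_sdiff, mem_univ, true_and] at hp
  obtain ⟨⟨hp1, hp2⟩, _⟩ := hp
  rw [card_insert_of_notMem (fun h => hp2 (mem_of_mem_erase h)),
    card_erase_of_mem hp1]
  have : 1 ≤ W.card := card_pos.2 ⟨p.1, hp1⟩
  omega

lemma nbr_sub_ball {L : ℕ} (W V : Finset (Fin L → Bool)) (hV : V ∈ nbrWords W) :
    V ∈ subBall L 1 W := by
  classical
  rw [nbrWords, mem_image] at hV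
  obtain ⟨p, hp, rfl⟩ := hV
  simp only [mem_filter, mem_product, mem_sdiff, mem_univ, true_and] at hp
  obtain ⟨⟨hp1, hp2⟩, hpd⟩ := hp
  refine ⟨fun y => if y = p.1 then p.2 else y, ?_, ?_⟩
  · rw [Finset.sum_eq_single p.1]
    · simp [hpd]
    · intro y _ hy; simp [hy]
    · intro h; exact absurd hp1 h
  · ext z
    simp only [mem_insert, mem_erase, mem_image]
    constructor
    · rintro (rfl | ⟨hz1, hz2⟩)
      · exact ⟨p.1, hp1, by simp⟩
      · exact ⟨z, hz2, by simp [hz1]⟩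
    · rintro ⟨y, hy, rfl⟩
      by_cases h : y = p.1
      · left; simp [h]
      · right; simp only [if_neg h]; exact ⟨h, hy⟩


open Finset

lemma hamming_neighbors_card {L : ℕ} (x : Fin L → Bool) :
    (univ.filter fun y => hammingDist x y = 1).card = L := by
  have : (univ.filter fun y => hammingDist x y = 1)
      = univ.image (fun i : Fin L => Function.update x i (!x i)) := by
    ext y
    simp only [mem_filter, mem_univ, true_and, mem_image]
    constructor
    · intro hy
      obtain ⟨i, hi⟩ := Finset.card_eq_one.1 hy
      refine ⟨i, ?_⟩
      funext j
      by_cases hj : j = i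
      · subst hj
        have : j ∈ ({j} : Finset (Fin L)) := mem_singleton_self j
        rw [← hi] at this
        simp only [mem_filter, mem_univ, true_and] at this
        simp [Function.update_self]
        cases hx : x j <;> cases hyj : y j <;> simp_all
      · have : j ∉ ({i} : Finset (Fin L)) := by simp [hj]
        rw [← hi] at this
        simp only [mem_filter, mem_univ, true_and, not_not] at this
        simp [Function.update_of_ne hj, this]
    · rintro ⟨i, rfl⟩
      show (filter _ _).card = 1
      rw [Finset.card_eq_one]
      refine ⟨i, ?_⟩
      ext j
      simp only [mem_filter, mem_univ, true_and, mem_singleton]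
      by_cases hj : j = i
      · subst hj; simp [Function.update_self]
      · simp [Function.update_of_ne hj, hj]
  rw [this, Finset.card_image_of_injective _ ?_, card_univ, Fintype.card_fin]
  intro i j hij
  by_contra hne
  have := congrFun hij i
  simp only [Function.update_self, Function.update_of_ne (Ne.symm hne)] at this
  cases h : x i <;> rw [h] at this <;>
    rw [Function.update_of_ne hne, h] at this <;> simp at this

lemma two_rpow_le_one_add {t : ℝ} (h0 : 0 ≤ t) (h1 : t ≤ 1) :
    Real.exp (t * Real.log 2) ≤ 1 + t := by
  have := convexOn_exp.2 (Set.mem_univ (Real.log 2)) (Set.mem_univ 0)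
    h0 (by linarith : (0:ℝ) ≤ 1 - t) (by ring)
  simp only [smul_eq_mul, mul_zero, add_zero, Real.exp_zero, Real.exp_log two_pos] at this
  calc Real.exp (t * Real.log 2) ≤ t * 2 + (1 - t) * 1 := this
    _ = 1 + t := by ring

lemma log_one_add_ge {t : ℝ} (h0 : 0 ≤ t) (h1 : t ≤ 1) :
    t * Real.log 2 ≤ Real.log (1 + t) := by
  rw [Real.le_log_iff_exp_le (by linarith)]
  exact two_rpow_le_one_add h0 h1

lemma key_ineq (a b : ℕ) (hab : a ≤ b) :
    (a:ℝ) * logb 2 a + b * logb 2 b + 2 * a ≤ (a+b) * logb 2 (a+b) := by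
  rcases Nat.eq_zero_or_pos a with rfl | ha
  · simp
  have ha' : (0:ℝ) < a := by exact_mod_cast ha
  have hb' : (0:ℝ) < b := lt_of_lt_of_le ha' (by exact_mod_cast hab)
  have hab' : (a:ℝ) ≤ b := by exact_mod_cast hab
  have hlog2 : (0:ℝ) < Real.log 2 := Real.log_pos one_lt_two
  -- first part : a * logb 2 (a+b) ≥ a * logb 2 a + a
  have h1 : (a:ℝ) * logb 2 a + a ≤ a * logb 2 (a+b) := by
    have : logb 2 (2*(a:ℝ)) ≤ logb 2 (a+b) :=
      Real.logb_le_logb_of_le one_lt_two (by positivity) (by linarith)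
    rw [Real.logb_mul two_ne_zero (ne_of_gt ha'),
      show Real.logb 2 2 = 1 by simp] at this
    nlinarith
  -- second part : b * logb 2 (a+b) ≥ b * logb 2 b + a
  have h2 : (b:ℝ) * logb 2 b + a ≤ b * logb 2 (a+b) := by
    have ht0 : (0:ℝ) ≤ a / b := by positivity
    have ht1 : (a:ℝ) / b ≤ 1 := by rw [div_le_one hb']; exact hab'
    have hlog := log_one_add_ge ht0 ht1
    have he : (1:ℝ) + a / b = (a+b)/b := by field_simp; ring
    rw [he] at hlog
    have : logb 2 ((a+b)/b) = logb 2 (a+b) - logb 2 b :=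
      Real.logb_div (by positivity) (ne_of_gt hb')
    have hlb : (a:ℝ)/b ≤ logb 2 ((a+b)/b) := by
      rw [Real.logb, le_div_iff₀ hlog2]
      calc (a:ℝ)/b * Real.log 2 = (a/b) * Real.log 2 := by ring
        _ ≤ Real.log ((a+b)/b) := hlog
    rw [this] at hlb
    have := mul_le_mul_of_nonneg_left hlb hb'.le
    rw [mul_div_cancel₀ _ (ne_of_gt hb')] at this
    nlinarith
  push_cast
  nlinarith


lemma hamming_cons {n : ℕ} (b c : Bool) (f g : Fin n → Bool) :
    hammingDist (Fin.cons b f : Fin (n+1) → Bool) (Fin.cons c g)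
      = (if b = c then 0 else 1) + hammingDist f g := by
  simp only [hammingDist, Finset.card_filter]
  rw [Fin.sum_univ_succ]
  simp only [Fin.cons_zero, Fin.cons_succ]
  congr 1
  split <;> simp_all

lemma edge_split {n : ℕ} (S : Finset (Fin (n+1) → Bool)) :
    edgeCount S =
      edgeCount (univ.filter fun f => (Fin.cons false f : Fin (n+1) → Bool) ∈ S)
      + edgeCount (univ.filter fun f => (Fin.cons true f : Fin (n+1) → Bool) ∈ S)
      + 2 * ((univ.filter fun f => (Fin.cons false f : Fin (n+1) → Bool) ∈ S)
          ∩ (univ.filter fun f => (Fin.cons true f : Fin (n+1) → Bool) ∈ S)).card := by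
  classical
  set A := univ.filter fun f => (Fin.cons false f : Fin (n+1) → Bool) ∈ S with hA
  set B := univ.filter fun f => (Fin.cons true f : Fin (n+1) → Bool) ∈ S with hB
  set F := (S ×ˢ S).filter fun p => hammingDist p.1 p.2 = 1 with hF
  have hmem : ∀ p ∈ F, p.1 ∈ S ∧ p.2 ∈ S ∧ hammingDist p.1 p.2 = 1 := by
    intro p hp
    simp only [hF, mem_filter, mem_product] at hp
    exact ⟨hp.1.1, hp.1.2, hp.2⟩
  -- split F by heads
  have hsplit : F.card =
      (F.filter fun p => p.1 0 = false ∧ p.2 0 = false).card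
      + (F.filter fun p => p.1 0 = true ∧ p.2 0 = true).card
      + ((F.filter fun p => p.1 0 = false ∧ p.2 0 = true).card
        + (F.filter fun p => p.1 0 = true ∧ p.2 0 = false).card) := by
    rw [← card_filter_add_card_filter_not (p := fun p => p.1 0 = p.2 0)]
    congr 1
    · rw [← card_filter_add_card_filter_not (p := fun p => p.1 0 = false)]
      congr 1 <;> rw [filter_filter] <;> congr 1 <;> ext p <;>
        cases h1 : p.1 0 <;> cases h2 : p.2 0 <;> simp [h1, h2]
    · rw [← card_filter_add_card_filter_not (p := fun p => p.1 0 = false)]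
      congr 1 <;> rw [filter_filter] <;> congr 1 <;> ext p <;>
        cases h1 : p.1 0 <;> cases h2 : p.2 0 <;> simp [h1, h2]
  -- same-head parts
  have hsame : ∀ b : Bool, (F.filter fun p => p.1 0 = b ∧ p.2 0 = b).card
      = edgeCount (univ.filter fun f => (Fin.cons b f : Fin (n+1) → Bool) ∈ S) := by
    intro b
    apply card_nbij' (fun p => (Fin.tail p.1, Fin.tail p.2))
      (fun q => (Fin.cons b q.1, Fin.cons b q.2))
    · intro p hp
      simp only [mem_coe, mem_filter] at hp
      obtain ⟨hpF, h1, h2⟩ := hp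
      obtain ⟨hS1, hS2, hd⟩ := hmem p hpF
      simp only [mem_coe, edgeCount, mem_filter, mem_product, mem_univ, true_and]
      have e1 : (Fin.cons b (Fin.tail p.1) : Fin (n+1) → Bool) = p.1 := by
        rw [← h1]; exact Fin.cons_self_tail p.1
      have e2 : (Fin.cons b (Fin.tail p.2) : Fin (n+1) → Bool) = p.2 := by
        rw [← h2]; exact Fin.cons_self_tail p.2
      refine ⟨⟨by rw [e1]; exact hS1, by rw [e2]; exact hS2⟩, ?_⟩
      have := hamming_cons b b (Fin.tail p.1) (Fin.tail p.2)
      rw [e1, e2] at this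
      simpa [hd] using this.symm
    · intro q hq
      simp only [mem_coe, edgeCount, mem_filter, mem_product, mem_univ, true_and] at hq
      simp only [mem_coe, mem_filter, hF, mem_product, Fin.cons_zero]
      refine ⟨⟨⟨hq.1.1, hq.1.2⟩, ?_⟩, by simp, by simp⟩
      rw [hamming_cons]
      simpa using hq.2
    · intro p hp
      simp only [mem_coe, mem_filter] at hp
      have e1 : (Fin.cons b (Fin.tail p.1) : Fin (n+1) → Bool) = p.1 := by
        rw [← hp.2.1]; exact Fin.cons_self_tail p.1
      have e2 : (Fin.cons b (Fin.tail p.2) : Fin (n+1) → Bool) = p.2 := by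
        rw [← hp.2.2]; exact Fin.cons_self_tail p.2
      exact Prod.ext e1 e2
    · intro q hq
      simp [Fin.tail_cons]
  -- cross-head parts
  have hcross : ∀ b : Bool, (F.filter fun p => p.1 0 = b ∧ p.2 0 = !b).card
      = (A ∩ B).card := by
    intro b
    apply card_nbij' (fun p => Fin.tail p.1)
      (fun f => (Fin.cons b f, Fin.cons (!b) f))
    · intro p hp
      simp only [mem_coe, mem_filter] at hp
      obtain ⟨hpF, h1, h2⟩ := hp
      obtain ⟨hS1, hS2, hd⟩ := hmem p hpF
      have e1 : (Fin.cons b (Fin.tail p.1) : Fin (n+1) → Bool) = p.1 := by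
        rw [← h1]; exact Fin.cons_self_tail p.1
      have e2 : (Fin.cons (!b) (Fin.tail p.2) : Fin (n+1) → Bool) = p.2 := by
        rw [← h2]; exact Fin.cons_self_tail p.2
      have hdist : hammingDist (Fin.cons b (Fin.tail p.1) : Fin (n+1) → Bool)
          (Fin.cons (!b) (Fin.tail p.2)) = 1 := by rw [e1, e2]; exact hd
      rw [hamming_cons, if_neg (by cases b <;> simp : ¬(b = !b))] at hdist
      have htail : Fin.tail p.1 = Fin.tail p.2 := hammingDist_eq_zero.1 (by omega)
      simp only [mem_coe, hA, hB, mem_inter, mem_filter, mem_univ, true_and]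
      cases b
      · refine ⟨by rw [e1]; exact hS1, ?_⟩
        rw [htail]
        simp only [Bool.not_false] at e2
        rw [e2]; exact hS2
      · refine ⟨?_, by rw [e1]; exact hS1⟩
        rw [htail]
        simp only [Bool.not_true] at e2
        rw [e2]; exact hS2
    · intro f hf
      simp only [mem_coe, hA, hB, mem_inter, mem_filter, mem_univ, true_and] at hf
      simp only [mem_coe, mem_filter, hF, mem_product, Fin.cons_zero]
      refine ⟨⟨⟨?_, ?_⟩, ?_⟩, by simp, by simp⟩
      · cases b; exacts [hf.1, hf.2]
      · cases b; exacts [hf.2, hf.1]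
      · rw [hamming_cons]; cases b <;> simp
    · intro p hp
      simp only [mem_coe, mem_filter] at hp
      obtain ⟨hpF, h1, h2⟩ := hp
      obtain ⟨hS1, hS2, hd⟩ := hmem p hpF
      have e1 : (Fin.cons b (Fin.tail p.1) : Fin (n+1) → Bool) = p.1 := by
        rw [← h1]; exact Fin.cons_self_tail p.1
      have e2 : (Fin.cons (!b) (Fin.tail p.2) : Fin (n+1) → Bool) = p.2 := by
        rw [← h2]; exact Fin.cons_self_tail p.2
      have hdist : hammingDist (Fin.cons b (Fin.tail p.1) : Fin (n+1) → Bool)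
          (Fin.cons (!b) (Fin.tail p.2)) = 1 := by rw [e1, e2]; exact hd
      rw [hamming_cons, if_neg (by cases b <;> simp : ¬(b = !b))] at hdist
      have htail : Fin.tail p.1 = Fin.tail p.2 := hammingDist_eq_zero.1 (by omega)
      exact Prod.ext e1 (by show (Fin.cons (!b) (Fin.tail p.1) : Fin (n+1) → Bool) = p.2; rw [htail]; exact e2)
    · intro f hf
      simp [Fin.tail_cons]
  show F.card = _
  rw [hsplit, hsame false, hsame true]
  have h1 := hcross false
  have h2 := hcross true
  simp only [Bool.not_false, Bool.not_true] at h1 h2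
  rw [h1, h2]
  ring

lemma card_split {n : ℕ} (S : Finset (Fin (n+1) → Bool)) :
    S.card = (univ.filter fun f => (Fin.cons false f : Fin (n+1) → Bool) ∈ S).card
      + (univ.filter fun f => (Fin.cons true f : Fin (n+1) → Bool) ∈ S).card := by
  classical
  rw [← card_filter_add_card_filter_not (p := fun x => x 0 = false) (s := S)]
  congr 1
  · apply card_nbij' Fin.tail (Fin.cons false)
    · intro x hx
      simp only [mem_coe, mem_filter] at hx
      simp only [mem_coe, mem_filter, mem_univ, true_and]
      rw [← hx.2, Fin.cons_self_tail]; exact hx.1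
    · intro f hf
      simp only [mem_coe, mem_filter, mem_univ, true_and] at hf
      simp [hf, Fin.cons_zero]
    · intro x hx
      simp only [mem_coe, mem_filter] at hx
      rw [← hx.2, Fin.cons_self_tail]
    · intro f _; exact Fin.tail_cons _ _
  · apply card_nbij' Fin.tail (Fin.cons true)
    · intro x hx
      simp only [mem_coe, mem_filter, Bool.not_eq_false] at hx
      simp only [mem_coe, mem_filter, mem_univ, true_and]
      rw [← hx.2, Fin.cons_self_tail]; exact hx.1
    · intro f hf
      simp only [mem_coe, mem_filter, mem_univ, true_and] at hf
      simp [hf, Fin.cons_zero]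
    · intro x hx
      simp only [mem_coe, mem_filter, Bool.not_eq_false] at hx
      rw [← hx.2, Fin.cons_self_tail]
    · intro f _; exact Fin.tail_cons _ _

lemma nat_mul_logb_nonneg (c : ℕ) : 0 ≤ (c:ℝ) * Real.logb 2 c := by
  rcases Nat.eq_zero_or_pos c with rfl | hc
  · simp
  · have h1 : (1:ℝ) ≤ c := by exact_mod_cast hc
    exact mul_nonneg (by positivity) (Real.logb_nonneg one_lt_two h1)

lemma key_ineq' (a b c : ℕ) (hca : c ≤ a) (hcb : c ≤ b)
    (key : ∀ a b : ℕ, a ≤ b →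
      (a:ℝ) * logb 2 a + b * logb 2 b + 2 * a ≤ (a+b) * logb 2 (a+b)) :
    (a:ℝ) * logb 2 a + b * logb 2 b + 2 * c ≤ (a+b) * logb 2 (a+b) := by
  rcases le_total a b with h | h
  · have := key a b h
    have hc : (c:ℝ) ≤ a := by exact_mod_cast hca
    linarith
  · have := key b a h
    have hc : (c:ℝ) ≤ b := by exact_mod_cast hcb
    have e : (b:ℝ) + a = a + b := by ring
    rw [e] at this
    linarith
lemma harper : ∀ {n : ℕ} (S : Finset (Fin n → Bool)),
    (edgeCount S : ℝ) ≤ S.card * Real.logb 2 S.card := by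
  intro n
  induction n with
  | zero =>
    intro S
    have h0 : edgeCount S = 0 := by
      rw [edgeCount, Finset.card_eq_zero, Finset.filter_eq_empty_iff]
      intro p _
      have : p.1 = p.2 := Subsingleton.elim _ _
      simp [this]
    rw [h0]
    exact_mod_cast nat_mul_logb_nonneg S.card
  | succ n ih =>
    intro S
    set A := univ.filter fun f => (Fin.cons false f : Fin (n+1) → Bool) ∈ S with hA
    set B := univ.filter fun f => (Fin.cons true f : Fin (n+1) → Bool) ∈ S with hB
    have hsplit := edge_split S
    have hcard := card_split S
    rw [← hA, ← hB] at hsplit hcard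
    have hABa : (A ∩ B).card ≤ A.card := card_le_card inter_subset_left
    have hABb : (A ∩ B).card ≤ B.card := card_le_card inter_subset_right
    calc (edgeCount S : ℝ)
        = edgeCount A + edgeCount B + 2 * (A ∩ B).card := by
          rw [hsplit]; push_cast; ring
      _ ≤ A.card * Real.logb 2 A.card + B.card * Real.logb 2 B.card
            + 2 * (A ∩ B).card := by
          have := ih A; have := ih B; linarith [ih A, ih B]
      _ ≤ (A.card + B.card) * Real.logb 2 (A.card + B.card) :=
          key_ineq' _ _ _ hABa hABb key_ineq
      _ = S.card * Real.logb 2 S.card := by rw [hcard]; push_cast; ring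

lemma x_le_two_rpow {x : ℝ} (hx : 0 ≤ x) : x ≤ (2:ℝ) ^ x := by
  rw [Real.rpow_def_of_pos two_pos]
  have h2 : Real.log 2 > 0.6931471803 := Real.log_two_gt_d9
  have key : Real.exp (Real.log 2 * x / 2) ≥ 1 + Real.log 2 * x / 2 := by
    have := Real.add_one_le_exp (Real.log 2 * x / 2); linarith
  have hsq : Real.exp (Real.log 2 * x) = (Real.exp (Real.log 2 * x / 2))^2 := by
    rw [sq, ← Real.exp_add]; ring_nf
  rw [hsq]
  have hpos : (0:ℝ) ≤ 1 + Real.log 2 * x / 2 := by nlinarith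
  nlinarith [sq_nonneg (Real.exp (Real.log 2 * x / 2)), key,
    sq_nonneg (Real.log 2 * x / 2 - 1), Real.exp_pos (Real.log 2 * x / 2)]

lemma choose_mono_below {n r s : ℕ} (hrs : r ≤ s) (hs : s ≤ n / 2) :
    n.choose r ≤ n.choose s := by
  induction s, hrs using Nat.le_induction with
  | base => rfl
  | succ k hk ih =>
    have hk2 : k < n / 2 := by omega
    exact le_trans (ih (by omega)) (Nat.choose_le_succ_of_lt_half_left hk2)

theorem stmt_10 (ε : ℝ) (hε0 : 0 < ε) (hε1 : ε < 1) (L M : ℕ) (hM0 : 0 < M)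
    (hM : (M : ℝ) ≤ 2 ^ ((1 - ε) * L)) (hL : 1 / ε < (L : ℝ))
    (C : Finset (Finset (Fin L → Bool)))
    (hCM : ∀ W ∈ C, W.card = M)
    (hCcode : ∀ W ∈ C, ∀ W' ∈ C, W ≠ W' → Disjoint (subBall L 1 W) (subBall L 1 W')) :
    (C.card : ℝ) ≤ ((2 ^ L).choose M : ℝ) / (ε * M * L) ∧
    Real.logb 2 (M * L) + Real.logb 2 ε
      ≤ Real.logb 2 ((2 ^ L).choose M) - Real.logb 2 C.card := by
  classical
  have hL0 : (0:ℝ) < L := lt_trans (by positivity) hL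
  have hLnat : 1 ≤ L := by exact_mod_cast Nat.one_le_iff_ne_zero.2 (by
    rintro rfl; simp at hL0)
  have hεL : 1 < ε * L := by
    have := (div_lt_iff₀ hε0).mp hL
    linarith [this]
  have hMpos : (0:ℝ) < M := by exact_mod_cast hM0
  have hP : (0:ℝ) < ε * M * L := by positivity
  have hlogM : Real.logb 2 (M:ℝ) ≤ (1-ε) * L := by
    calc Real.logb 2 (M:ℝ) ≤ Real.logb 2 ((2:ℝ) ^ ((1-ε)*(L:ℝ))) :=
        Real.logb_le_logb_of_le one_lt_two hMpos hM
      _ = (1-ε)*L := Real.logb_rpow two_pos (by norm_num)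
  have hNlb : ∀ W ∈ C, (ε * M * L) ≤ ((nbrWords W).card : ℝ) := by
    intro W hW
    have hcard := hCM W hW
    have h1 : ((nbrWords W).card:ℝ) = M * L - edgeCount W := by
      rw [nbr_card_real W hamming_neighbors_card, hcard]
    have h2 : (edgeCount W : ℝ) ≤ M * Real.logb 2 M := by
      have h := harper W; rw [hcard] at h; exact h
    have h3 : (M:ℝ) * Real.logb 2 M ≤ M * ((1-ε)*L) :=
      mul_le_mul_of_nonneg_left hlogM (le_of_lt hMpos)
    rw [h1]; nlinarith
  have hdisj : ∀ W ∈ C, ∀ W' ∈ C, W ≠ W' → Disjoint (nbrWords W) (nbrWords W') := by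
    intro W hW W' hW' hne
    rw [Finset.disjoint_left]
    intro V hV hV'
    exact Set.disjoint_left.mp (hCcode W hW W' hW' hne)
      (nbr_sub_ball _ _ hV) (nbr_sub_ball _ _ hV')
  have hsum : ∑ W ∈ C, (nbrWords W).card ≤ (2^L).choose M := by
    have hsub : C.biUnion nbrWords
        ⊆ Finset.powersetCard M (univ : Finset (Fin L → Bool)) := by
      intro V hV
      rw [mem_biUnion] at hV
      obtain ⟨W, hW, hVW⟩ := hV
      rw [Finset.mem_powersetCard_univ, nbr_card_mem W V hVW, hCM W hW]
    have h1 := card_le_card hsub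
    rw [Finset.card_powersetCard, card_univ] at h1
    have h2 : Fintype.card (Fin L → Bool) = 2^L := by simp [Fintype.card_fun]
    rw [h2] at h1
    rw [← Finset.card_biUnion hdisj]
    exact h1
  have hmain : (C.card : ℝ) * (ε*M*L) ≤ ((2^L).choose M : ℝ) := by
    have e1 : (C.card : ℝ) * (ε*M*L) = ∑ _W ∈ C, (ε*M*L) := by
      rw [Finset.sum_const, nsmul_eq_mul]
    have e2 : ∑ _W ∈ C, (ε*M*L) ≤ ∑ W ∈ C, ((nbrWords W).card : ℝ) :=
      Finset.sum_le_sum hNlb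
    have e3 : ∑ W ∈ C, ((nbrWords W).card : ℝ)
        = ((∑ W ∈ C, (nbrWords W).card : ℕ) : ℝ) := by push_cast; rfl
    have e4 : ((∑ W ∈ C, (nbrWords W).card : ℕ) : ℝ) ≤ ((2 ^ L).choose M : ℝ) :=
      Nat.cast_le.mpr hsum
    rw [e1]
    rw [e3] at e2
    exact le_trans e2 e4
  refine ⟨by rw [le_div_iff₀ hP]; exact hmain, ?_⟩
  rcases Nat.eq_zero_or_pos C.card with h0 | hpos
  · rw [h0]
    simp only [Nat.cast_zero, Real.logb_zero, sub_zero]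
    have hεML : ε * ((M:ℝ) * L) ≤ ((2^L).choose M : ℝ) := by
      have hx : ε * L ≤ (2:ℝ) ^ (ε * L) := x_le_two_rpow (by positivity)
      have hstep : ε * ((M:ℝ) * L) ≤ (2:ℝ) ^ (ε*(L:ℝ)) * (2:ℝ) ^ ((1-ε)*(L:ℝ)) := by
        have h1 : ε * ((M:ℝ) * L) = (ε * L) * M := by ring
        rw [h1]
        apply mul_le_mul hx hM hMpos.le (by positivity)
      have h2L : (2:ℝ) ^ (ε*(L:ℝ)) * (2:ℝ) ^ ((1-ε)*(L:ℝ)) = ((2^L : ℕ) : ℝ) := by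
        rw [← Real.rpow_add two_pos]
        have : ε*(L:ℝ) + (1-ε)*(L:ℝ) = ((L:ℕ):ℝ) := by ring
        rw [this, Real.rpow_natCast]
        push_cast
        ring
      rw [h2L] at hstep
      refine le_trans hstep ?_
      have hM2 : M ≤ 2^(L-1) := by
        have hexp : (1-ε)*(L:ℝ) ≤ ((L-1 : ℕ) : ℝ) := by
          rw [Nat.cast_sub hLnat]
          push_cast
          nlinarith
        have := le_trans hM (Real.rpow_le_rpow_of_exponent_le one_le_two hexp)
        rw [Real.rpow_natCast] at this
        exact_mod_cast this
      have hdiv : 2^L / 2 = 2^(L-1) := by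
        have h : 2^L = 2^(L-1)*2 := by
          rw [← pow_succ]
          congr 1
          omega
        omega
      have hmono : (2^L).choose 1 ≤ (2^L).choose M :=
        choose_mono_below hM0 (by rw [hdiv]; exact hM2)
      rw [Nat.choose_one_right] at hmono
      exact_mod_cast hmono
    have heq : Real.logb 2 ((M:ℝ) * (L:ℝ)) + Real.logb 2 ε
        = Real.logb 2 (ε * ((M:ℝ)*(L:ℝ))) := by
      rw [Real.logb_mul (ne_of_gt hε0) (by positivity)]
      ring
    rw [heq]
    exact Real.logb_le_logb_of_le one_lt_two (by positivity) hεML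
  · have hC0 : (0:ℝ) < C.card := by exact_mod_cast hpos
    have hlb := Real.logb_le_logb_of_le one_lt_two (by positivity) hmain
    rw [Real.logb_mul (ne_of_gt hC0) (ne_of_gt hP),
      Real.logb_mul (by positivity : ε * (M:ℝ) ≠ 0) (ne_of_gt hL0),
      Real.logb_mul (ne_of_gt hε0) (ne_of_gt hMpos)] at hlb
    rw [Real.logb_mul (ne_of_gt hMpos) (ne_of_gt hL0)]
    linarith
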